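/- At maximal drift parameter γ = 1, the drift procedure deterministically reverses the ordering of probability masses: if the historical feature distribution assigns masses p_1 ≥ p_2 ≥ ... ≥ p_d to features 1,...,d, then the future distribution assigns mass p_{d+1−i} to feature i, and among all distributions obtained by permuting the masses (p_1,...,p_d) over the features, this reversal maximizes the total variation distance to the historical distribution. -/
import Mathlib

open Finset

private lemma tele_sum (q : ℕ → ℝ) {a b : ℕ} (h : a ≤ b) :
    ∑ k ∈ Finset.Ico a b, (q k - q (k+1)) = q a - q b := by
  induction b with
  | zero => simp_all
  | succ n ih =>
    rcases Nat.lt_or_ge a (n+1) with h' | h'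
    · rw [Finset.sum_Ico_succ_top (by omega), ih (by omega)]; ring
    · have : a = n + 1 := by omega
      subst this; simp

/-- At maximal drift γ = 1 the masses are reassigned in reverse order, and among all
permutations of the sorted masses (p_1 ≥ ... ≥ p_d), the reversal maximizes the total
variation distance (1/2)∑|p_i − p_{σ(i)}| to the historical distribution. -/
theorem stmt_18 {d : ℕ} (hd : 1 ≤ d) (p : Fin d → ℝ) (hnn : ∀ i, 0 ≤ p i)
    (hsum : ∑ i, p i = 1) (hsorted : ∀ i j : Fin d, i ≤ j → p j ≤ p i) :
    ∀ σ : Equiv.Perm (Fin d),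
      (1 / 2) * ∑ i, |p i - p (σ i)| ≤ (1 / 2) * ∑ i, |p i - p i.rev| := by
  intro σ
  -- abs via max
  have habs : ∀ i j : Fin d, |p i - p j| = p i + p j - 2 * p (max i j) := by
    intro i j
    rcases le_total i j with h | h
    · rw [max_eq_right h, abs_of_nonneg (by linarith [hsorted i j h])]; ring
    · rw [max_eq_left h, abs_of_nonpos (by linarith [hsorted j i h])]; ring
  -- step function q
  set q : ℕ → ℝ := fun n => if h : n < d then p ⟨n, h⟩ else 0 with hq
  have hqd : q d = 0 := by simp [hq]
  have hqstep : ∀ n, 0 ≤ q n - q (n+1) := by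
    intro n
    by_cases h1 : n + 1 < d
    · have := hsorted ⟨n, by omega⟩ ⟨n+1, h1⟩ (by simp [Fin.le_def])
      simp only [hq, dif_pos (show n < d by omega), dif_pos h1]
      linarith
    · by_cases h2 : n < d
      · simp only [hq, dif_pos h2, dif_neg h1]
        simpa using hnn ⟨n, h2⟩
      · simp only [hq, dif_neg h1, dif_neg h2]; norm_num
  -- representation of p i as sum of steps
  have hrep : ∀ i : Fin d, p i = ∑ k ∈ range d, if (i : ℕ) ≤ k then q k - q (k+1) else 0 := by
    intro i
    rw [← Finset.sum_filter]
    have hfil : (range d).filter (fun k => (i : ℕ) ≤ k) = Finset.Ico (i : ℕ) d := by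
      ext k; simp only [mem_filter, mem_range, Finset.mem_Ico]; omega
    rw [hfil, tele_sum q (le_of_lt i.isLt), hqd, sub_zero]
    simp [hq, i.isLt]
  -- general sum formula
  have hsum_rep : ∀ f : Fin d → Fin d,
      ∑ i, p (f i) = ∑ k ∈ range d,
        (q k - q (k+1)) * ((univ.filter (fun i : Fin d => ((f i : ℕ)) ≤ k)).card : ℝ) := by
    intro f
    calc ∑ i, p (f i)
        = ∑ i, ∑ k ∈ range d, if ((f i : ℕ)) ≤ k then q k - q (k+1) else 0 :=
          Finset.sum_congr rfl fun i _ => hrep (f i)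
      _ = ∑ k ∈ range d, ∑ i, if ((f i : ℕ)) ≤ k then q k - q (k+1) else 0 :=
          Finset.sum_comm
      _ = _ := by
          refine Finset.sum_congr rfl fun k _ => ?_
          rw [← Finset.sum_filter, Finset.sum_const, nsmul_eq_mul, mul_comm]
  -- cardinality comparison
  have hcard : ∀ k : ℕ,
      (univ.filter (fun i : Fin d => ((max i i.rev : Fin d) : ℕ) ≤ k)).card ≤
      (univ.filter (fun i : Fin d => ((max i (σ i) : Fin d) : ℕ) ≤ k)).card := by
    intro k
    set A : Finset (Fin d) := univ.filter (fun i => (i : ℕ) ≤ k) with hA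
    set B : Finset (Fin d) := univ.filter (fun i => ((σ i : Fin d) : ℕ) ≤ k) with hB
    set C : Finset (Fin d) := univ.filter (fun i => ((i.rev : Fin d) : ℕ) ≤ k) with hC
    have hmax : ∀ (j : Fin d) (i : Fin d), ((max i j : Fin d) : ℕ) ≤ k ↔
        (i : ℕ) ≤ k ∧ (j : ℕ) ≤ k := by
      intro j i
      rcases le_total i j with h | h
      · rw [max_eq_right h]
        constructor
        · intro hk; exact ⟨le_trans h hk, hk⟩
        · exact fun h' => h'.2
      · rw [max_eq_left h]
        constructor
        · intro hk; exact ⟨hk, le_trans h hk⟩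
        · exact fun h' => h'.1
    have hsetσ : univ.filter (fun i : Fin d => ((max i (σ i) : Fin d) : ℕ) ≤ k) = A ∩ B := by
      ext i
      simp only [mem_filter, mem_univ, true_and, hA, hB, Finset.mem_inter, hmax (σ i) i]
    have hsetr : univ.filter (fun i : Fin d => ((max i i.rev : Fin d) : ℕ) ≤ k) = A ∩ C := by
      ext i
      simp only [mem_filter, mem_univ, true_and, hA, hC, Finset.mem_inter, hmax i.rev i]
    rw [hsetσ, hsetr]
    -- card B = card A, card C = card A
    have hBA : B.card = A.card := by
      refine Finset.card_bij' (fun i _ => σ i) (fun j _ => σ.symm j) ?_ ?_ ?_ ?_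
      · intro i hi; simp only [hB, mem_filter] at hi; simp [hA, hi.2]
      · intro j hj; simp only [hA, mem_filter] at hj; simp [hB, hj.2]
      · intro i _; simp
      · intro j _; simp
    have hCA : C.card = A.card := by
      refine Finset.card_bij' (fun i _ => i.rev) (fun j _ => j.rev) ?_ ?_ ?_ ?_
      · intro i hi; simp only [hC, mem_filter] at hi; simpa [hA] using hi.2
      · intro j hj; simp only [hA, mem_filter] at hj
        simp only [hC, mem_filter, mem_univ, true_and, Fin.rev_rev]
        exact hj.2
      · intro i _; simp [Fin.rev_rev]
      · intro j _; simp [Fin.rev_rev]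
    rcases le_or_gt d (2 * (k + 1)) with hdk | hdk
    · -- A ∪ C = univ
      have hunion : A ∪ C = univ := by
        ext i
        simp only [Finset.mem_union, mem_filter, mem_univ, true_and, hA, hC, iff_true]
        have hv : (i.rev : ℕ) = d - 1 - (i : ℕ) := by
          simp [Fin.val_rev]; omega
        have := i.isLt
        omega
      have h1 := Finset.card_inter_add_card_union A B
      have h2 := Finset.card_inter_add_card_union A C
      have h3 : (A ∪ B).card ≤ d := by
        simpa using Finset.card_le_card (Finset.subset_univ (A ∪ B))
      have h4 : (A ∪ C).card = d := by rw [hunion]; simp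
      omega
    · -- A and C disjoint
      have hdisj : A ∩ C = ∅ := by
        ext i
        simp only [Finset.mem_inter, mem_filter, mem_univ, true_and, hA, hC,
          Finset.notMem_empty, iff_false, not_and]
        intro hik
        have hv : (i.rev : ℕ) = d - 1 - (i : ℕ) := by
          simp [Fin.val_rev]; omega
        have := i.isLt
        omega
      rw [hdisj]
      simp
  -- sums over permuted/reversed indices
  have hσsum : ∑ i, p (σ i) = 1 := by
    rw [← hsum]
    exact Fintype.sum_equiv σ _ _ (fun i => rfl)
  have hrsum : ∑ i, p (Fin.rev i) = 1 := by
    rw [← hsum]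
    exact Fintype.sum_bijective Fin.rev Fin.rev_bijective _ _ (fun i => rfl)
  -- expand both sides
  have hexpσ : ∑ i, |p i - p (σ i)| = 2 - 2 * ∑ i, p (max i (σ i)) := by
    have : ∑ i, |p i - p (σ i)| = ∑ i, (p i + p (σ i) - 2 * p (max i (σ i))) :=
      Finset.sum_congr rfl fun i _ => habs i (σ i)
    rw [this, Finset.sum_sub_distrib, Finset.sum_add_distrib, hsum, hσsum, ← Finset.mul_sum]
    ring
  have hexpr : ∑ i, |p i - p i.rev| = 2 - 2 * ∑ i, p (max i i.rev) := by
    have : ∑ i, |p i - p i.rev| = ∑ i, (p i + p i.rev - 2 * p (max i i.rev)) :=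
      Finset.sum_congr rfl fun i _ => habs i i.rev
    rw [this, Finset.sum_sub_distrib, Finset.sum_add_distrib, hsum, hrsum, ← Finset.mul_sum]
    ring
  -- compare the two "max" sums
  have hkey : ∑ i, p (max i i.rev) ≤ ∑ i, p (max i (σ i)) := by
    rw [hsum_rep (fun i => max i i.rev), hsum_rep (fun i => max i (σ i))]
    refine Finset.sum_le_sum fun k _ => ?_
    exact mul_le_mul_of_nonneg_left (by exact_mod_cast hcard k) (hqstep k)
  rw [hexpσ, hexpr]
  linarith
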